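/- Let H be the Hilbert space ℓ² of square-summable complex sequences indexed by ℕ with standard orthonormal basis (e_k). Let a, b : ℤ → ℂ be finitely supported and let c be their convolution, c(k) = Σ_{j∈ℤ} a(j)·b(k−j). Suppose T_a, T_b, T_c : H → H are continuous linear operators with matrix entries ⟨T_a e_n, e_m⟩ = a(m−n), ⟨T_b e_n, e_m⟩ = b(m−n), ⟨T_c e_n, e_m⟩ = c(m−n) for all m, n ∈ ℕ, and let K₁, K₂ : H → H be compact continuous linear operators. Then (T_a + K₁) ∘ (T_b + K₂) − T_c is a compact operator; that is, the product of two compact perturbations of Toeplitz operators is a compact perturbation of the Toeplitz operator whose symbol is the product of the symbols. -/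

import Mathlib

open scoped BigOperators

noncomputable def coordCLM (m : ℕ) : lp (fun _ : ℕ => ℂ) 2 →L[ℂ] ℂ :=
  LinearMap.mkContinuous
    { toFun := fun f => f m
      map_add' := fun f g => by simp [lp.coeFn_add]
      map_smul' := fun c f => by simp [lp.coeFn_smul] }
    1 (fun f => by
      show ‖f m‖ ≤ 1 * ‖f‖
      simpa using lp.norm_apply_le_norm (by norm_num : (2 : ENNReal) ≠ 0) f m)

@[simp] lemma coordCLM_apply (m : ℕ) (f : lp (fun _ : ℕ => ℂ) 2) :
    coordCLM m f = f m := rfl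

lemma lp_eq_sum_single (f : lp (fun _ : ℕ => ℂ) 2) (S : Finset ℕ)
    (h : ∀ i ∉ S, f i = 0) : f = ∑ i ∈ S, lp.single 2 i (f i) := by
  ext j
  rw [lp.coeFn_sum]
  simp only [Finset.sum_apply, lp.single_apply]
  rw [Finset.sum_pi_single]
  by_cases hj : j ∈ S
  · simp [hj]
  · simp [hj, h j hj]

lemma single_eq_smul (n : ℕ) (z : ℂ) :
    lp.single (E := fun _ : ℕ => ℂ) 2 n z = z • lp.single 2 n (1 : ℂ) := by
  rw [← lp.single_smul]
  norm_num

lemma coord_zero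
    (a b c : ℤ → ℂ) (ha : (Function.support a).Finite)
    (hc : ∀ k : ℤ, c k = ∑ᶠ j : ℤ, a j * b (k - j))
    (Ta Tb Tc : lp (fun _ : ℕ => ℂ) 2 →L[ℂ] lp (fun _ : ℕ => ℂ) 2)
    (hTa : ∀ m n : ℕ, (Ta (lp.single 2 n 1)) m = a ((m : ℤ) - (n : ℤ)))
    (hTb : ∀ m n : ℕ, (Tb (lp.single 2 n 1)) m = b ((m : ℤ) - (n : ℤ)))
    (hTc : ∀ m n : ℕ, (Tc (lp.single 2 n 1)) m = c ((m : ℤ) - (n : ℤ)))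
    (Na Nb : ℕ) (hNa : ∀ k : ℤ, a k ≠ 0 → k.natAbs < Na)
    (hNb : ∀ k : ℤ, b k ≠ 0 → k.natAbs < Nb)
    (n m : ℕ) (hm : Na + Nb ≤ m) :
    ((Ta.comp Tb - Tc) (lp.single 2 n 1)) m = 0 := by
  classical
  have hTbn : Tb (lp.single 2 n 1)
      = ∑ l ∈ Finset.range (n + Nb), lp.single 2 l (b ((l : ℤ) - n)) := by
    rw [lp_eq_sum_single (Tb (lp.single 2 n 1)) (Finset.range (n + Nb)) (fun l hl => by
      rw [hTb]
      by_contra h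
      have := hNb _ h
      simp only [Finset.mem_range, not_lt] at hl
      omega)]
    exact Finset.sum_congr rfl fun l _ => by rw [hTb]
  have hTab : (Ta (Tb (lp.single 2 n 1))) m
      = ∑ l ∈ Finset.range (n + Nb), b ((l : ℤ) - n) * a ((m : ℤ) - l) := by
    rw [hTbn, map_sum, lp.coeFn_sum, Finset.sum_apply]
    refine Finset.sum_congr rfl fun l _ => ?_
    rw [single_eq_smul, map_smul, lp.coeFn_smul, Pi.smul_apply, hTa, smul_eq_mul]
  have hcm : c ((m : ℤ) - n) = ∑ j ∈ ha.toFinset, a j * b ((m : ℤ) - n - j) := by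
    rw [hc]
    apply finsum_eq_finset_sum_of_support_subset
    intro j hj
    have haj : a j ≠ 0 := by
      intro h
      apply hj
      simp [Function.mem_support, h]
    simpa [Set.Finite.coe_toFinset] using haj
  set V : Finset ℤ := (Finset.range (n + Nb)).image (Nat.cast : ℕ → ℤ) ∪
      ha.toFinset.image (fun j => (m : ℤ) - j) with hV
  have e1 : ∑ l ∈ (Finset.range (n + Nb)).image (Nat.cast : ℕ → ℤ),
      b (l - n) * a ((m : ℤ) - l) = ∑ l ∈ Finset.range (n + Nb), b ((l : ℤ) - n) * a ((m : ℤ) - l) :=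
    Finset.sum_image (fun x _ y _ h => Nat.cast_injective h)
  have h1 : ∑ l ∈ Finset.range (n + Nb), b ((l : ℤ) - n) * a ((m : ℤ) - l)
      = ∑ l ∈ V, b (l - n) * a ((m : ℤ) - l) := by
    rw [← e1]
    apply Finset.sum_subset Finset.subset_union_left
    intro l hlV hl
    by_contra hne
    have hb' : b (l - n) ≠ 0 := fun h => hne (by simp [h])
    have ha' : a ((m : ℤ) - l) ≠ 0 := fun h => hne (by simp [h])
    have hb1 := hNb _ hb'
    have ha1 := hNa _ ha'
    apply hl
    simp only [Finset.mem_image, Finset.mem_range]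
    exact ⟨l.toNat, by omega, by omega⟩
  have e2 : ∑ l ∈ ha.toFinset.image (fun j => (m : ℤ) - j), b (l - n) * a ((m : ℤ) - l)
      = ∑ j ∈ ha.toFinset, b ((m : ℤ) - j - n) * a ((m : ℤ) - ((m : ℤ) - j)) :=
    Finset.sum_image (fun x _ y _ h => by omega)
  have h2 : ∑ j ∈ ha.toFinset, a j * b ((m : ℤ) - n - j)
      = ∑ l ∈ V, b (l - n) * a ((m : ℤ) - l) := by
    have e3 : ∑ j ∈ ha.toFinset, a j * b ((m : ℤ) - n - j)
        = ∑ l ∈ ha.toFinset.image (fun j => (m : ℤ) - j), b (l - n) * a ((m : ℤ) - l) := by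
      rw [e2]
      refine Finset.sum_congr rfl fun j _ => ?_
      have : (m : ℤ) - ((m : ℤ) - j) = j := by ring
      rw [this]
      have : (m : ℤ) - j - n = (m : ℤ) - n - j := by ring
      rw [this, mul_comm]
    rw [e3]
    apply Finset.sum_subset Finset.subset_union_right
    intro l hlV hl
    by_contra hne
    have ha' : a ((m : ℤ) - l) ≠ 0 := fun h => hne (by simp [h])
    apply hl
    simp only [Finset.mem_image, Set.Finite.mem_toFinset, Function.mem_support]
    exact ⟨(m : ℤ) - l, ha', by ring⟩
  have hsub : ((Ta.comp Tb - Tc) (lp.single 2 n 1)) m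
      = (Ta (Tb (lp.single 2 n 1))) m - (Tc (lp.single 2 n 1)) m := by
    simp [ContinuousLinearMap.sub_apply, lp.coeFn_sub, Pi.sub_apply]
  rw [hsub, hTab, hTc, hcm, h1, h2, sub_self]


/-- The product of two compact perturbations of Toeplitz operators on `ℓ²` is a compact
perturbation of the Toeplitz operator whose symbol is the product of the symbols
(i.e. whose coefficient sequence is the convolution of the coefficient sequences). -/
theorem product_of_compact_perturbations_of_toeplitz
    (a b c : ℤ → ℂ)
    (ha : (Function.support a).Finite) (hb : (Function.support b).Finite)
    (hc : ∀ k : ℤ, c k = ∑ᶠ j : ℤ, a j * b (k - j))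
    (Ta Tb Tc : lp (fun _ : ℕ => ℂ) 2 →L[ℂ] lp (fun _ : ℕ => ℂ) 2)
    (hTa : ∀ m n : ℕ, (Ta (lp.single 2 n 1)) m = a ((m : ℤ) - (n : ℤ)))
    (hTb : ∀ m n : ℕ, (Tb (lp.single 2 n 1)) m = b ((m : ℤ) - (n : ℤ)))
    (hTc : ∀ m n : ℕ, (Tc (lp.single 2 n 1)) m = c ((m : ℤ) - (n : ℤ)))
    (K₁ K₂ : lp (fun _ : ℕ => ℂ) 2 →L[ℂ] lp (fun _ : ℕ => ℂ) 2)
    (hK₁ : IsCompactOperator K₁) (hK₂ : IsCompactOperator K₂) :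
    IsCompactOperator ((Ta + K₁).comp (Tb + K₂) - Tc) := by
  classical
  obtain ⟨Na, hNa⟩ : ∃ Na : ℕ, ∀ k : ℤ, a k ≠ 0 → k.natAbs < Na := by
    obtain ⟨Na, hNa⟩ := (ha.image Int.natAbs).bddAbove
    exact ⟨Na + 1, fun k hk => by
      have := hNa (Set.mem_image_of_mem _ hk)
      omega⟩
  obtain ⟨Nb, hNb⟩ : ∃ Nb : ℕ, ∀ k : ℤ, b k ≠ 0 → k.natAbs < Nb := by
    obtain ⟨Nb, hNb⟩ := (hb.image Int.natAbs).bddAbove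
    exact ⟨Nb + 1, fun k hk => by
      have := hNb (Set.mem_image_of_mem _ hk)
      omega⟩
  set D : lp (fun _ : ℕ => ℂ) 2 →L[ℂ] lp (fun _ : ℕ => ℂ) 2 := Ta.comp Tb - Tc with hD
  -- coordinates ≥ Na + Nb of D x vanish
  have hDx : ∀ (x : lp (fun _ : ℕ => ℂ) 2) (m : ℕ), Na + Nb ≤ m → (D x) m = 0 := by
    intro x m hm
    have hsum : HasSum (fun n : ℕ => lp.single 2 n (x n)) x :=
      lp.hasSum_single (by norm_num) x
    have h2 : HasSum (fun n : ℕ => ((coordCLM m).comp D) (lp.single 2 n (x n)))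
        (((coordCLM m).comp D) x) := ((coordCLM m).comp D).hasSum hsum
    have hz : ∀ n : ℕ, ((coordCLM m).comp D) (lp.single 2 n (x n)) = 0 := by
      intro n
      have hcz := coord_zero a b c ha hc Ta Tb Tc hTa hTb hTc Na Nb hNa hNb n m hm
      rw [ContinuousLinearMap.comp_apply, single_eq_smul n (x n), map_smul]
      simp only [coordCLM_apply, lp.coeFn_smul, Pi.smul_apply, smul_eq_mul]
      rw [← hD] at hcz
      rw [hcz, mul_zero]
    have h0 : HasSum (fun n : ℕ => ((coordCLM m).comp D) (lp.single 2 n (x n))) 0 := by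
      rw [show (fun n : ℕ => ((coordCLM m).comp D) (lp.single 2 n (x n)))
          = (fun _ : ℕ => (0 : ℂ)) from funext hz]
      exact hasSum_zero
    exact h2.unique h0
  -- range of D lies in a finite-dimensional subspace
  set F : Submodule ℂ (lp (fun _ : ℕ => ℂ) 2) :=
    Submodule.span ℂ (Set.range fun i : Fin (Na + Nb) => lp.single 2 (i : ℕ) (1 : ℂ)) with hF
  haveI : FiniteDimensional ℂ F := FiniteDimensional.span_of_finite ℂ (Set.finite_range _)
  have hmem : ∀ x, D x ∈ F := by
    intro x
    have hx1 : D x = ∑ i ∈ Finset.range (Na + Nb), lp.single 2 i ((D x) i) :=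
      lp_eq_sum_single (D x) (Finset.range (Na + Nb))
        (fun i hi => hDx x i (by simpa using Finset.mem_range.not.mp hi))
    rw [hx1]
    refine Submodule.sum_mem _ fun i hi => ?_
    rw [single_eq_smul]
    exact Submodule.smul_mem _ _ (Submodule.subset_span
      ⟨⟨i, Finset.mem_range.mp hi⟩, rfl⟩)
  -- D is a compact operator
  have hDc : IsCompactOperator D := by
    refine ⟨Subtype.val '' Metric.closedBall (0 : F) ‖D‖, ?_, ?_⟩
    · exact (isCompact_closedBall _ _).image continuous_subtype_val
    · refine Filter.mem_of_superset (Metric.ball_mem_nhds 0 one_pos) ?_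
      intro x hx
      refine ⟨⟨D x, hmem x⟩, ?_, rfl⟩
      rw [Metric.mem_closedBall, dist_zero_right]
      show ‖D x‖ ≤ ‖D‖
      calc ‖D x‖ ≤ ‖D‖ * ‖x‖ := D.le_opNorm x
        _ ≤ ‖D‖ * 1 := by
            have : ‖x‖ ≤ 1 := le_of_lt (by simpa [dist_zero_right] using hx)
            exact mul_le_mul_of_nonneg_left this (norm_nonneg D)
        _ = ‖D‖ := mul_one _
  -- decompose the operator
  have hdec : (Ta + K₁).comp (Tb + K₂) - Tc
      = D + (Ta.comp K₂ + (K₁.comp Tb + K₁.comp K₂)) := by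
    ext x
    simp only [hD, ContinuousLinearMap.add_comp, ContinuousLinearMap.comp_add,
      ContinuousLinearMap.add_apply, ContinuousLinearMap.sub_apply]
    abel
  rw [hdec]
  exact hDc.add ((hK₂.continuous_comp Ta.continuous).add
    ((hK₁.comp_clm Tb).add (hK₂.continuous_comp K₁.continuous)))
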